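/- (Generalized evolutionary NLS equation.) Let 𝔙 be a regular vessel with d = 2 and generalized NLS parameters σ1 = I, σ2 = diag(a,−a) with a ≠ 0, γ = [[γ11, γ12],[γ21, −γ11]], and write H_0(x,t) = [[h11, h12],[h21, h22]]. Then on Ω the entry h12 satisfies the generalized NLS equation 2a·∂_t h12 = i·∂_{xx} h12 − 2i·γ11·∂_x h12 + 2i·(2a·h12·h21 − γ21·h12 + γ12·h21)·(γ12 + 2a·h12). -/

import Mathlib

noncomputable section

open ContinuousLinearMap

/-- The coefficient space `ℂ^d`. -/
abbrev Ed (d : ℕ) : Type := EuclideanSpace ℂ (Fin d)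

/-- A `d × d` complex matrix viewed as a continuous linear map on `ℂ^d`. -/
def m2c {d : ℕ} (σ : Matrix (Fin d) (Fin d) ℂ) : Ed d →L[ℂ] Ed d :=
  Matrix.toEuclideanCLM (𝕜 := ℂ) σ

/-- A continuous linear map on `ℂ^d` viewed as a `d × d` complex matrix. -/
def c2m {d : ℕ} (T : Ed d →L[ℂ] Ed d) : Matrix (Fin d) (Fin d) ℂ :=
  (Matrix.toEuclideanCLM (𝕜 := ℂ)).symm T

/-- Partial derivative in the first (space) variable. -/
def pdx {M : Type*} [NormedAddCommGroup M] [NormedSpace ℝ M]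
    (F : ℝ × ℝ → M) (p : ℝ × ℝ) : M :=
  deriv (fun x => F (x, p.2)) p.1

/-- Partial derivative in the second (time) variable. -/
def pdt {M : Type*} [NormedAddCommGroup M] [NormedSpace ℝ M]
    (F : ℝ × ℝ → M) (p : ℝ × ℝ) : M :=
  deriv (fun t => F (p.1, t)) p.2

/-- Entrywise partial derivative in `x` of a matrix-valued function. -/
def pdxM {d : ℕ} (F : ℝ × ℝ → Matrix (Fin d) (Fin d) ℂ) (p : ℝ × ℝ) :
    Matrix (Fin d) (Fin d) ℂ :=
  Matrix.of fun i j => pdx (fun q => F q i j) p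

/-- Entrywise partial derivative in `t` of a matrix-valued function. -/
def pdtM {d : ℕ} (F : ℝ × ℝ → Matrix (Fin d) (Fin d) ℂ) (p : ℝ × ℝ) :
    Matrix (Fin d) (Fin d) ℂ :=
  Matrix.of fun i j => pdt (fun q => F q i j) p

/-- A regular vessel with inner (Krein/Hilbert) space `K` and coefficient space `ℂ^d`. -/
structure Vessel (K : Type*) [NormedAddCommGroup K] [InnerProductSpace ℂ K]
    [CompleteSpace K] (d : ℕ) where
  Ω : Set (ℝ × ℝ)
  hΩ : IsOpen Ω
  A : K →L[ℂ] K
  Aζ : K →L[ℂ] K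
  B : ℝ × ℝ → Ed d →L[ℂ] K
  C : ℝ × ℝ → K →L[ℂ] Ed d
  X : ℝ × ℝ → K →L[ℂ] K
  /-- pointwise inverse of `X` -/
  Xi : ℝ × ℝ → K →L[ℂ] K
  σ1 : Matrix (Fin d) (Fin d) ℂ
  σ2 : Matrix (Fin d) (Fin d) ℂ
  γ : Matrix (Fin d) (Fin d) ℂ
  γs : ℝ × ℝ → Matrix (Fin d) (Fin d) ℂ
  hσ1 : IsUnit σ1
  smoothB : ContDiffOn ℝ 2 B Ω
  smoothC : ContDiffOn ℝ 2 C Ω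
  smoothX : ContDiffOn ℝ 2 X Ω
  hXinv : ∀ p ∈ Ω, X p ∘L Xi p = (1 : K →L[ℂ] K) ∧ Xi p ∘L X p = (1 : K →L[ℂ] K)
  eqBx : ∀ p ∈ Ω,
    pdx B p ∘L m2c σ1 + A ∘L B p ∘L m2c σ2 + B p ∘L m2c γ = 0
  eqBt : ∀ p ∈ Ω, pdt B p = Complex.I • (A ∘L pdx B p)
  eqCx : ∀ p ∈ Ω,
    m2c σ1 ∘L pdx C p + m2c σ2 ∘L C p ∘L Aζ - m2c γ ∘L C p = 0
  eqCt : ∀ p ∈ Ω, pdt C p = (-Complex.I) • (pdx C p ∘L Aζ)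
  eqXx : ∀ p ∈ Ω, pdx X p = B p ∘L m2c σ2 ∘L C p
  eqXt : ∀ p ∈ Ω, pdt X p =
    Complex.I • (A ∘L B p ∘L m2c σ2 ∘L C p) -
      Complex.I • (B p ∘L m2c σ2 ∘L C p ∘L Aζ) +
      Complex.I • (B p ∘L m2c γ ∘L C p)
  eqLyap : ∀ p ∈ Ω, A ∘L X p + X p ∘L Aζ + B p ∘L m2c σ1 ∘L C p = 0
  eqLink : ∀ p ∈ Ω, γs p =
    γ + σ2 * c2m (C p ∘L Xi p ∘L B p) * σ1 - σ1 * c2m (C p ∘L Xi p ∘L B p) * σ2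

/-- The `n`-th moment `H_n = C 𝕏⁻¹ Aⁿ B` of a vessel, as a `d × d` matrix. -/
def Vessel.H {K : Type*} [NormedAddCommGroup K] [InnerProductSpace ℂ K]
    [CompleteSpace K] {d : ℕ} (V : Vessel K d) (n : ℕ) (p : ℝ × ℝ) :
    Matrix (Fin d) (Fin d) ℂ :=
  c2m (V.C p ∘L V.Xi p ∘L (V.A ^ n) ∘L V.B p)

namespace NLSaux
open ContinuousLinearMap

/-! ### Generic helper lemmas -/

variable {E F G : Type*} [NormedAddCommGroup E] [NormedSpace ℂ E]
  [NormedAddCommGroup F] [NormedSpace ℂ F] [NormedAddCommGroup G] [NormedSpace ℂ G]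

lemma isBBM_compR : IsBoundedBilinearMap ℝ
    (fun p : (F →L[ℂ] G) × (E →L[ℂ] F) => p.1.comp p.2) where
  add_left f f' g := by simp [add_comp]
  smul_left r f g := by simp
  add_right f g g' := by simp [comp_add]
  smul_right r f g := by simp
  bound := ⟨1, one_pos, fun f g => by simpa using opNorm_comp_le f g⟩

lemma _root_.HasDerivAt.clm_compR {c : ℝ → F →L[ℂ] G} {c' : F →L[ℂ] G}
    {d : ℝ → E →L[ℂ] F} {d' : E →L[ℂ] F} {x : ℝ}
    (hc : HasDerivAt c c' x) (hd : HasDerivAt d d' x) :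
    HasDerivAt (fun y => (c y).comp (d y)) (c'.comp (d x) + (c x).comp d') x := by
  have h := (isBBM_compR (E := E) (F := F) (G := G)).hasFDerivAt (c x, d x)
  have := h.comp_hasDerivAt x (hc.prodMk hd)
  simpa [IsBoundedBilinearMap.deriv, add_comm, Function.comp_def] using this

lemma c2m_comp {d : ℕ} (f g : Ed d →L[ℂ] Ed d) : c2m (f ∘L g) = c2m f * c2m g := by
  rw [← ContinuousLinearMap.mul_def, c2m, map_mul]; rfl

lemma c2m_add {d : ℕ} (f g : Ed d →L[ℂ] Ed d) : c2m (f + g) = c2m f + c2m g := map_add _ _ _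
lemma c2m_sub {d : ℕ} (f g : Ed d →L[ℂ] Ed d) : c2m (f - g) = c2m f - c2m g := map_sub _ _ _
lemma c2m_smul {d : ℕ} (z : ℂ) (f : Ed d →L[ℂ] Ed d) : c2m (z • f) = z • c2m f := map_smul _ _ _
lemma c2m_m2c {d : ℕ} (σ : Matrix (Fin d) (Fin d) ℂ) : c2m (m2c σ) = σ :=
  StarAlgEquiv.symm_apply_apply _ _
lemma m2c_one {d : ℕ} : m2c (1 : Matrix (Fin d) (Fin d) ℂ) = 1 := map_one _

/-- entry functional as a continuous linear map -/
def entryCLM {d : ℕ} (i j : Fin d) : (Ed d →L[ℂ] Ed d) →L[ℝ] ℂ :=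
  LinearMap.toContinuousLinearMap
    { toFun := fun T => c2m T i j
      map_add' := fun f g => by simp only [c2m_add]; rfl
      map_smul' := fun r f => by
        simp only [show r • f = (r : ℂ) • f from rfl, c2m_smul]; rfl }

lemma _root_.HasDerivAt.c2m_entry {d : ℕ} {Φ : ℝ → Ed d →L[ℂ] Ed d} {D : Ed d →L[ℂ] Ed d}
    {x : ℝ} (i j : Fin d) (h : HasDerivAt Φ D x) :
    HasDerivAt (fun y => c2m (Φ y) i j) (c2m D i j) x := by
  have := (entryCLM i j).hasFDerivAt.comp_hasDerivAt x h
  exact this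

/-! ### slices -/

lemma sliceX {M : Type*} [NormedAddCommGroup M] [NormedSpace ℝ M]
    {F : ℝ × ℝ → M} {Ω : Set (ℝ × ℝ)} (hΩ : IsOpen Ω) (hF : ContDiffOn ℝ 2 F Ω)
    {p : ℝ × ℝ} (hp : p ∈ Ω) :
    HasDerivAt (fun x => F (x, p.2)) (pdx F p) p.1 := by
  have h0 : DifferentiableAt ℝ F p :=
    (hF.contDiffAt (hΩ.mem_nhds hp)).differentiableAt (by norm_num)
  have h1 : DifferentiableAt ℝ (fun x : ℝ => F (x, p.2)) p.1 :=
    h0.comp p.1 (differentiableAt_id.prodMk (differentiableAt_const _))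
  exact h1.hasDerivAt

lemma sliceT {M : Type*} [NormedAddCommGroup M] [NormedSpace ℝ M]
    {F : ℝ × ℝ → M} {Ω : Set (ℝ × ℝ)} (hΩ : IsOpen Ω) (hF : ContDiffOn ℝ 2 F Ω)
    {p : ℝ × ℝ} (hp : p ∈ Ω) :
    HasDerivAt (fun t => F (p.1, t)) (pdt F p) p.2 := by
  have h0 : DifferentiableAt ℝ F p :=
    (hF.contDiffAt (hΩ.mem_nhds hp)).differentiableAt (by norm_num)
  have h1 : DifferentiableAt ℝ (fun t : ℝ => F (p.1, t)) p.2 :=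
    h0.comp p.2 ((differentiableAt_const _).prodMk differentiableAt_id)
  exact h1.hasDerivAt

lemma evX {Ω : Set (ℝ × ℝ)} (hΩ : IsOpen Ω) {p : ℝ × ℝ} (hp : p ∈ Ω) :
    ∀ᶠ x in nhds p.1, (x, p.2) ∈ Ω := by
  have hc : ContinuousAt (fun x : ℝ => (x, p.2)) p.1 :=
    (continuous_id.prodMk continuous_const).continuousAt
  exact hc.preimage_mem_nhds (hΩ.mem_nhds hp)

lemma evT {Ω : Set (ℝ × ℝ)} (hΩ : IsOpen Ω) {p : ℝ × ℝ} (hp : p ∈ Ω) :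
    ∀ᶠ t in nhds p.2, (p.1, t) ∈ Ω := by
  have hc : ContinuousAt (fun t : ℝ => (p.1, t)) p.2 :=
    (continuous_const.prodMk continuous_id).continuousAt
  exact hc.preimage_mem_nhds (hΩ.mem_nhds hp)

/-! ### Vessel-level facts -/

variable {K : Type*} [NormedAddCommGroup K] [InnerProductSpace ℂ K] [CompleteSpace K]

/-- `X r` as a unit of the ring of endomorphisms. -/
def Xunit (V : Vessel K 2) {r : ℝ × ℝ} (hr : r ∈ V.Ω) : (K →L[ℂ] K)ˣ where
  val := V.X r
  inv := V.Xi r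
  val_inv := by rw [ContinuousLinearMap.mul_def]; exact (V.hXinv r hr).1
  inv_val := by rw [ContinuousLinearMap.mul_def]; exact (V.hXinv r hr).2

lemma Xi_eq (V : Vessel K 2) {r : ℝ × ℝ} (hr : r ∈ V.Ω) :
    V.Xi r = Ring.inverse (V.X r) :=
  (Ring.inverse_unit (Xunit V hr)).symm

lemma hYx (V : Vessel K 2) {r : ℝ × ℝ} (hr : r ∈ V.Ω) :
    HasDerivAt (fun x => V.Xi (x, r.2))
      (-(V.Xi r ∘L (pdx V.X r ∘L V.Xi r))) r.1 := by
  have hX := sliceX V.hΩ V.smoothX hr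
  have hinv := hasFDerivAt_ringInverse (𝕜 := ℝ) (R := K →L[ℂ] K) (Xunit V hr)
  have h2 : HasDerivAt (fun x => Ring.inverse (V.X (x, r.2)))
      ((-mulLeftRight ℝ (K →L[ℂ] K) (V.Xi r) (V.Xi r)) (pdx V.X r)) r.1 :=
    by have := hinv.comp_hasDerivAt r.1 hX; exact this
  have h3 : (-mulLeftRight ℝ (K →L[ℂ] K) (V.Xi r) (V.Xi r)) (pdx V.X r)
      = -(V.Xi r ∘L (pdx V.X r ∘L V.Xi r)) := by
    simp [mulLeftRight_apply, ContinuousLinearMap.mul_def, comp_assoc]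
  rw [h3] at h2
  refine h2.congr_of_eventuallyEq ?_
  exact (evX V.hΩ hr).mono fun x hx => Xi_eq V hx

lemma hYt (V : Vessel K 2) {r : ℝ × ℝ} (hr : r ∈ V.Ω) :
    HasDerivAt (fun t => V.Xi (r.1, t))
      (-(V.Xi r ∘L (pdt V.X r ∘L V.Xi r))) r.2 := by
  have hX := sliceT V.hΩ V.smoothX hr
  have hinv := hasFDerivAt_ringInverse (𝕜 := ℝ) (R := K →L[ℂ] K) (Xunit V hr)
  have h2 : HasDerivAt (fun t => Ring.inverse (V.X (r.1, t)))
      ((-mulLeftRight ℝ (K →L[ℂ] K) (V.Xi r) (V.Xi r)) (pdt V.X r)) r.2 :=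
    by have := hinv.comp_hasDerivAt r.2 hX; exact this
  have h3 : (-mulLeftRight ℝ (K →L[ℂ] K) (V.Xi r) (V.Xi r)) (pdt V.X r)
      = -(V.Xi r ∘L (pdt V.X r ∘L V.Xi r)) := by
    simp [mulLeftRight_apply, ContinuousLinearMap.mul_def, comp_assoc]
  rw [h3] at h2
  refine h2.congr_of_eventuallyEq ?_
  exact (evT V.hΩ hr).mono fun t ht => Xi_eq V ht

lemma pdxC_eq (V : Vessel K 2) (hσ1 : V.σ1 = 1) {r : ℝ × ℝ} (hr : r ∈ V.Ω) :
    pdx V.C r = m2c V.γ ∘L V.C r - m2c V.σ2 ∘L (V.C r ∘L V.Aζ) := by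
  have h := V.eqCx r hr
  rw [hσ1] at h
  simp only [m2c_one, one_def, id_comp] at h
  rw [← sub_eq_zero, ← h]; abel

lemma pdxB_eq (V : Vessel K 2) (hσ1 : V.σ1 = 1) {r : ℝ × ℝ} (hr : r ∈ V.Ω) :
    pdx V.B r = -(V.A ∘L (V.B r ∘L m2c V.σ2) + V.B r ∘L m2c V.γ) := by
  have h := V.eqBx r hr
  rw [hσ1] at h
  simp only [m2c_one, one_def, comp_id] at h
  rw [← sub_eq_zero, ← h]; abel

lemma hAzY (V : Vessel K 2) (hσ1 : V.σ1 = 1) {r : ℝ × ℝ} (hr : r ∈ V.Ω) :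
    V.Aζ ∘L V.Xi r = -(V.Xi r ∘L V.A)
      - V.Xi r ∘L (V.B r ∘L (V.C r ∘L V.Xi r)) := by
  have h := V.eqLyap r hr
  rw [hσ1] at h
  simp only [m2c_one, one_def, id_comp] at h
  have hXY := (V.hXinv r hr).1
  have hYX := (V.hXinv r hr).2
  have h1 : V.X r ∘L V.Aζ = -(V.A ∘L V.X r) - V.B r ∘L V.C r := by
    rw [← sub_eq_zero, ← h]; abel
  calc V.Aζ ∘L V.Xi r
      = (V.Xi r ∘L V.X r) ∘L (V.Aζ ∘L V.Xi r) := by rw [hYX, one_def, id_comp]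
    _ = V.Xi r ∘L ((V.X r ∘L V.Aζ) ∘L V.Xi r) := by simp only [comp_assoc]
    _ = _ := by
        rw [h1]
        simp only [sub_comp, neg_comp, comp_sub, comp_neg, comp_assoc]
        rw [show V.A ∘L (V.X r ∘L V.Xi r) = V.A from by rw [hXY, one_def, comp_id]]

/-! ### moment operators and their derivatives -/

def H0op (V : Vessel K 2) (q : ℝ × ℝ) : Ed 2 →L[ℂ] Ed 2 :=
  V.C q ∘L (V.Xi q ∘L V.B q)

def H1op (V : Vessel K 2) (q : ℝ × ℝ) : Ed 2 →L[ℂ] Ed 2 :=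
  V.C q ∘L (V.Xi q ∘L (V.A ∘L V.B q))

def D0op (V : Vessel K 2) (q : ℝ × ℝ) : Ed 2 →L[ℂ] Ed 2 :=
  (m2c V.γ ∘L V.C q - m2c V.σ2 ∘L (V.C q ∘L V.Aζ)) ∘L (V.Xi q ∘L V.B q)
    + V.C q ∘L ((-(V.Xi q ∘L ((V.B q ∘L (m2c V.σ2 ∘L V.C q)) ∘L V.Xi q))) ∘L V.B q
      + V.Xi q ∘L (-(V.A ∘L (V.B q ∘L m2c V.σ2) + V.B q ∘L m2c V.γ)))

def D1op (V : Vessel K 2) (q : ℝ × ℝ) : Ed 2 →L[ℂ] Ed 2 :=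
  (m2c V.γ ∘L V.C q - m2c V.σ2 ∘L (V.C q ∘L V.Aζ)) ∘L (V.Xi q ∘L (V.A ∘L V.B q))
    + V.C q ∘L ((-(V.Xi q ∘L ((V.B q ∘L (m2c V.σ2 ∘L V.C q)) ∘L V.Xi q))) ∘L (V.A ∘L V.B q)
      + V.Xi q ∘L (V.A ∘L (-(V.A ∘L (V.B q ∘L m2c V.σ2) + V.B q ∘L m2c V.γ))))

lemma hH0mat (V : Vessel K 2) (q : ℝ × ℝ) : V.H 0 q = c2m (H0op V q) := by
  simp only [Vessel.H, H0op, pow_zero, one_def, id_comp]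

lemma hYx' (V : Vessel K 2) {r : ℝ × ℝ} (hr : r ∈ V.Ω) :
    HasDerivAt (fun x => V.Xi (x, r.2))
      (-(V.Xi r ∘L ((V.B r ∘L (m2c V.σ2 ∘L V.C r)) ∘L V.Xi r))) r.1 := by
  have h := hYx V hr
  rwa [V.eqXx r hr] at h

lemma hH0x (V : Vessel K 2) (hσ1 : V.σ1 = 1) {r : ℝ × ℝ} (hr : r ∈ V.Ω) :
    HasDerivAt (fun x => H0op V (x, r.2)) (D0op V r) r.1 := by
  have hC := sliceX V.hΩ V.smoothC hr
  have hB := sliceX V.hΩ V.smoothB hr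
  have h := hC.clm_compR ((hYx' V hr).clm_compR hB)
  rw [pdxC_eq V hσ1 hr, pdxB_eq V hσ1 hr] at h
  exact h

lemma hH1x (V : Vessel K 2) (hσ1 : V.σ1 = 1) {r : ℝ × ℝ} (hr : r ∈ V.Ω) :
    HasDerivAt (fun x => H1op V (x, r.2)) (D1op V r) r.1 := by
  have hC := sliceX V.hΩ V.smoothC hr
  have hB := sliceX V.hΩ V.smoothB hr
  have hAB := (hasDerivAt_const r.1 V.A).clm_compR hB
  have h := hC.clm_compR ((hYx' V hr).clm_compR hAB)
  rw [pdxC_eq V hσ1 hr, pdxB_eq V hσ1 hr] at h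
  simp only [zero_comp, zero_add] at h
  exact h

lemma hH0t (V : Vessel K 2) (hσ1 : V.σ1 = 1) {r : ℝ × ℝ} (hr : r ∈ V.Ω) :
    HasDerivAt (fun t => H0op V (r.1, t))
      (Complex.I • D1op V r + Complex.I • (D0op V r ∘L H0op V r)) r.2 := by
  have hC := sliceT V.hΩ V.smoothC hr
  have hB := sliceT V.hΩ V.smoothB hr
  have hY := hYt V hr
  rw [V.eqCt r hr, pdxC_eq V hσ1 hr] at hC
  rw [V.eqBt r hr, pdxB_eq V hσ1 hr] at hB
  rw [V.eqXt r hr] at hY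
  have h := hC.clm_compR (hY.clm_compR hB)
  refine h.congr_deriv ?_
  have hA' : ∀ (w : Ed 2 →L[ℂ] K),
      V.Aζ ∘L (V.Xi r ∘L w) = (-(V.Xi r ∘L V.A)
        - V.Xi r ∘L (V.B r ∘L (V.C r ∘L V.Xi r))) ∘L w := by
    intro w; rw [← comp_assoc, hAzY V hσ1 hr]
  simp only [H0op, D0op, D1op]
  simp only [comp_add, add_comp, comp_sub, sub_comp, comp_neg, neg_comp, smul_comp,
    comp_smul, smul_add, smul_sub, smul_neg, comp_assoc, hA']
  module



lemma m2e00 (x y z w : ℂ) : (!![x,y;z,w] : Matrix (Fin 2) (Fin 2) ℂ) 0 0 = x := rfl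
lemma m2e01 (x y z w : ℂ) : (!![x,y;z,w] : Matrix (Fin 2) (Fin 2) ℂ) 0 1 = y := rfl
lemma m2e10 (x y z w : ℂ) : (!![x,y;z,w] : Matrix (Fin 2) (Fin 2) ℂ) 1 0 = z := rfl
lemma m2e11 (x y z w : ℂ) : (!![x,y;z,w] : Matrix (Fin 2) (Fin 2) ℂ) 1 1 = w := rfl

lemma c2m_D0 (V : Vessel K 2) (hσ1 : V.σ1 = 1) {r : ℝ × ℝ} (hr : r ∈ V.Ω) :
    c2m (D0op V r) = V.σ2 * c2m (H1op V r) - c2m (H1op V r) * V.σ2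
      + (V.γ + V.σ2 * c2m (H0op V r) - c2m (H0op V r) * V.σ2) * c2m (H0op V r)
      - c2m (H0op V r) * V.γ := by
  have hA' : ∀ (w : Ed 2 →L[ℂ] K),
      V.Aζ ∘L (V.Xi r ∘L w) = (-(V.Xi r ∘L V.A)
        - V.Xi r ∘L (V.B r ∘L (V.C r ∘L V.Xi r))) ∘L w := by
    intro w; rw [← comp_assoc, hAzY V hσ1 hr]
  have halg : D0op V r = m2c V.σ2 ∘L H1op V r - H1op V r ∘L m2c V.σ2
      + (m2c V.γ + m2c V.σ2 ∘L H0op V r - H0op V r ∘L m2c V.σ2) ∘L H0op V r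
      - H0op V r ∘L m2c V.γ := by
    simp only [D0op, H0op, H1op]
    simp only [comp_add, add_comp, comp_sub, sub_comp, comp_neg, neg_comp,
      comp_assoc, hA']
    abel
  rw [halg]
  simp only [c2m_sub, c2m_add, c2m_comp, c2m_m2c]

lemma pdx_h12_eq (V : Vessel K 2) {a γ11 γ12 γ21 : ℂ} (hσ1 : V.σ1 = 1)
    (hσ2 : V.σ2 = !![a, 0; 0, -a]) (hγ : V.γ = !![γ11, γ12; γ21, -γ11])
    {r : ℝ × ℝ} (hr : r ∈ V.Ω) :
    pdx (fun q => c2m (H0op V q) 0 1) r =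
      2 * a * (c2m (H1op V r) 0 1) +
        (2 * γ11 * (c2m (H0op V r) 0 1)
          + (γ12 + 2 * a * (c2m (H0op V r) 0 1)) * (c2m (H0op V r) 1 1)
          - γ12 * (c2m (H0op V r) 0 0)) := by
  have h := ((hH0x V hσ1 hr).c2m_entry 0 1).deriv
  have h2 : pdx (fun q => c2m (H0op V q) 0 1) r = c2m (D0op V r) 0 1 := h
  rw [h2, c2m_D0 V hσ1 hr]
  simp [Matrix.mul_apply, Fin.sum_univ_two, Matrix.vecMul, Matrix.vecHead, Matrix.vecTail, dotProduct, hσ2, hγ]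
  ring

lemma c2m_D0_00 (V : Vessel K 2) {a γ11 γ12 γ21 : ℂ} (hσ1 : V.σ1 = 1)
    (hσ2 : V.σ2 = !![a, 0; 0, -a]) (hγ : V.γ = !![γ11, γ12; γ21, -γ11])
    {r : ℝ × ℝ} (hr : r ∈ V.Ω) :
    c2m (D0op V r) 0 0 = 2 * a * (c2m (H0op V r) 0 1) * (c2m (H0op V r) 1 0)
      - γ21 * (c2m (H0op V r) 0 1) + γ12 * (c2m (H0op V r) 1 0) := by
  rw [c2m_D0 V hσ1 hr]
  simp [Matrix.mul_apply, Fin.sum_univ_two, Matrix.vecMul, Matrix.vecHead, Matrix.vecTail, dotProduct, hσ2, hγ]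
  ring

lemma c2m_D0_11 (V : Vessel K 2) {a γ11 γ12 γ21 : ℂ} (hσ1 : V.σ1 = 1)
    (hσ2 : V.σ2 = !![a, 0; 0, -a]) (hγ : V.γ = !![γ11, γ12; γ21, -γ11])
    {r : ℝ × ℝ} (hr : r ∈ V.Ω) :
    c2m (D0op V r) 1 1 = -(2 * a * (c2m (H0op V r) 0 1) * (c2m (H0op V r) 1 0)
      - γ21 * (c2m (H0op V r) 0 1) + γ12 * (c2m (H0op V r) 1 0)) := by
  rw [c2m_D0 V hσ1 hr]
  simp [Matrix.mul_apply, Fin.sum_univ_two, Matrix.vecMul, Matrix.vecHead, Matrix.vecTail, dotProduct, hσ2, hγ]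
  ring

end NLSaux

open NLSaux in
/-- the `(1,2)` entry of the first moment of a vessel with generalized
NLS parameters satisfies the generalized evolutionary NLS equation. -/
theorem generalized_NLS_equation {K : Type*} [NormedAddCommGroup K]
    [InnerProductSpace ℂ K] [CompleteSpace K]
    (V : Vessel K 2) (a γ11 γ12 γ21 : ℂ) (ha : a ≠ 0)
    (hσ1 : V.σ1 = 1) (hσ2 : V.σ2 = !![a, 0; 0, -a])
    (hγ : V.γ = !![γ11, γ12; γ21, -γ11])
    (h12 h21 : ℝ × ℝ → ℂ)
    (hh12 : h12 = fun q => V.H 0 q 0 1) (hh21 : h21 = fun q => V.H 0 q 1 0) :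
    ∀ p ∈ V.Ω,
      2 * a * pdt h12 p =
        Complex.I * pdx (pdx h12) p - 2 * Complex.I * γ11 * pdx h12 p +
          2 * Complex.I * (2 * a * h12 p * h21 p - γ21 * h12 p + γ12 * h21 p) *
            (γ12 + 2 * a * h12 p) := by
  intro p hp
  simp only [hh12, hh21, hH0mat]
  have hx0 := hH0x V hσ1 hp
  have hx1 := hH1x V hσ1 hp
  have ht0 := hH0t V hσ1 hp
  have hv : HasDerivAt (fun x => c2m (H0op V (x, p.2)) 0 1)
      (c2m (D0op V p) 0 1) p.1 := hx0.c2m_entry 0 1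
  have hu : HasDerivAt (fun x => c2m (H0op V (x, p.2)) 0 0)
      (c2m (D0op V p) 0 0) p.1 := hx0.c2m_entry 0 0
  have hw : HasDerivAt (fun x => c2m (H0op V (x, p.2)) 1 1)
      (c2m (D0op V p) 1 1) p.1 := hx0.c2m_entry 1 1
  have hg : HasDerivAt (fun x => c2m (H1op V (x, p.2)) 0 1)
      (c2m (D1op V p) 0 1) p.1 := hx1.c2m_entry 0 1
  -- pdx of h12 at p
  have hpx : pdx (fun q => c2m (H0op V q) 0 1) p = c2m (D0op V p) 0 1 := hv.deriv
  -- pdt of h12 at p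
  have hpt : pdt (fun q => c2m (H0op V q) 0 1) p
      = Complex.I * (c2m (D1op V p) 0 1)
        + Complex.I * ((c2m (D0op V p) 0 0) * (c2m (H0op V p) 0 1)
          + (c2m (D0op V p) 0 1) * (c2m (H0op V p) 1 1)) := by
    have h : pdt (fun q => c2m (H0op V q) 0 1) p
        = c2m (Complex.I • D1op V p + Complex.I • (D0op V p ∘L H0op V p)) 0 1 :=
      (ht0.c2m_entry 0 1).deriv
    rw [h, c2m_add, c2m_smul, c2m_smul, c2m_comp]
    simp only [Matrix.add_apply, Matrix.smul_apply, Matrix.mul_apply,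
      Fin.sum_univ_two, smul_eq_mul]
  -- second x-derivative of h12 at p
  have hxx : pdx (pdx (fun q => c2m (H0op V q) 0 1)) p
      = 2 * a * (c2m (D1op V p) 0 1)
        + ((2 * γ11 * (c2m (D0op V p) 0 1)
            + ((2 * a * (c2m (D0op V p) 0 1)) * (c2m (H0op V p) 1 1)
              + (γ12 + 2 * a * (c2m (H0op V p) 0 1)) * (c2m (D0op V p) 1 1)))
          - γ12 * (c2m (D0op V p) 0 0)) := by
    have heq : (fun x => pdx (fun q => c2m (H0op V q) 0 1) (x, p.2)) =ᶠ[nhds p.1]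
        (fun x => 2 * a * (c2m (H1op V (x, p.2)) 0 1) +
          (2 * γ11 * (c2m (H0op V (x, p.2)) 0 1)
            + (γ12 + 2 * a * (c2m (H0op V (x, p.2)) 0 1)) * (c2m (H0op V (x, p.2)) 1 1)
            - γ12 * (c2m (H0op V (x, p.2)) 0 0))) :=
      (evX V.hΩ hp).mono fun x hx => pdx_h12_eq V hσ1 hσ2 hγ hx
    have hD : HasDerivAt
        (fun x => 2 * a * (c2m (H1op V (x, p.2)) 0 1) +
          (2 * γ11 * (c2m (H0op V (x, p.2)) 0 1)
            + (γ12 + 2 * a * (c2m (H0op V (x, p.2)) 0 1)) * (c2m (H0op V (x, p.2)) 1 1)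
            - γ12 * (c2m (H0op V (x, p.2)) 0 0)))
        (2 * a * (c2m (D1op V p) 0 1)
          + ((2 * γ11 * (c2m (D0op V p) 0 1)
              + ((2 * a * (c2m (D0op V p) 0 1)) * (c2m (H0op V p) 1 1)
                + (γ12 + 2 * a * (c2m (H0op V p) 0 1)) * (c2m (D0op V p) 1 1)))
            - γ12 * (c2m (D0op V p) 0 0))) p.1 :=
      (hg.const_mul (2 * a)).add
        (((hv.const_mul (2 * γ11)).add
          (((hv.const_mul (2 * a)).const_add γ12).mul hw)).sub (hu.const_mul γ12))
    calc pdx (pdx (fun q => c2m (H0op V q) 0 1)) p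
        = deriv (fun x => pdx (fun q => c2m (H0op V q) 0 1) (x, p.2)) p.1 := rfl
      _ = _ := by rw [heq.deriv_eq, hD.deriv]
  rw [hpt, hxx, hpx, c2m_D0_00 V hσ1 hσ2 hγ hp, c2m_D0_11 V hσ1 hσ2 hγ hp]
  ring
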